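/- arXiv:2505.10419 — 2 statements merged into one kernel-verified Lean document; each statement's English description precedes it below -/
import Mathlib

section
/- The function F(u) = 1 − 2·sinc(u/2)²/(1 + sinc(u)) is strictly monotonically increasing on the interval (0, 2]. -/
open Real

/-- Normalized sinc: `sinc(x) = sin(πx)/(πx)` for `x ≠ 0`, `sinc(0) = 1`. -/
noncomputable def nsinc (x : ℝ) : ℝ :=
  if x = 0 then 1 else Real.sin (π * x) / (π * x)

lemma my_sin_lb {y : ℝ} (hy : 0 < y) : y - y^3/6 < Real.sin y := by
  have key : StrictMonoOn (fun t : ℝ => Real.sin t - (t - t^3/6)) (Set.Ici 0) := by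
    apply strictMonoOn_of_deriv_pos (convex_Ici 0)
    · fun_prop
    · intro t ht
      rw [interior_Ici] at ht
      have hd : HasDerivAt (fun t : ℝ => Real.sin t - (t - t^3/6))
          (Real.cos t - (1 - 3*t^2/6)) t := by
        have := (Real.hasDerivAt_sin t).sub
          (((hasDerivAt_id t).sub (((hasDerivAt_pow 3 t)).div_const 6)))
        exact this.congr_deriv (by norm_num)
      rw [hd.deriv]
      have := Real.one_sub_sq_div_two_lt_cos (x := t) (ne_of_gt ht)
      nlinarith
  have := key (Set.self_mem_Ici) (Set.mem_Ici.mpr hy.le) hy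
  simp at this
  linarith

lemma my_tan_lb {y : ℝ} (hy : 0 < y) (hy2 : y < π/2) : y + y^3/3 < Real.tan y := by
  have key : StrictMonoOn (fun t : ℝ => Real.tan t - (t + t^3/3)) (Set.Ico 0 (π/2)) := by
    apply strictMonoOn_of_deriv_pos (convex_Ico 0 (π/2))
    · apply ContinuousOn.sub
      · apply ContinuousOn.mono Real.continuousOn_tan
        intro t ht
        simp only [Set.mem_setOf_eq]
        exact ne_of_gt (Real.cos_pos_of_mem_Ioo ⟨by linarith [ht.1, pi_pos], ht.2⟩)
      · fun_prop
    · intro t ht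
      rw [interior_Ico] at ht
      have hc : Real.cos t ≠ 0 :=
        ne_of_gt (Real.cos_pos_of_mem_Ioo ⟨by linarith [ht.1, pi_pos], ht.2⟩)
      have hd : HasDerivAt (fun t : ℝ => Real.tan t - (t + t^3/3))
          (1 / Real.cos t ^ 2 - (1 + 3*t^2/3)) t := by
        have := (Real.hasDerivAt_tan hc).sub
          ((hasDerivAt_id t).add ((hasDerivAt_pow 3 t).div_const 3))
        exact this.congr_deriv (by norm_num)
      rw [hd.deriv]
      have htan : t < Real.tan t := Real.lt_tan ht.1 ht.2
      have h1 : 1 / Real.cos t ^ 2 = 1 + Real.tan t ^ 2 := by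
        rw [Real.tan_eq_sin_div_cos]
        field_simp
        linarith [Real.sin_sq_add_cos_sq t]
      rw [h1]
      nlinarith [mul_self_lt_mul_self (le_of_lt ht.1) htan, ht.1]
  have := key (Set.mem_Ico.mpr ⟨le_refl 0, by linarith [pi_pos]⟩)
    (Set.mem_Ico.mpr ⟨hy.le, hy2⟩) hy
  simp [Real.tan_zero] at this
  linarith

lemma key_ineq {x : ℝ} (hx : 0 < x) (hx2 : x < 2*π) :
    x^2 * Real.sin x < (x + Real.sin x) * (1 - Real.cos x) := by
  set y := x/2 with hy_def
  have hy : 0 < y := by positivity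
  have hyπ : y < π := by rw [hy_def]; linarith
  have hs : 0 < Real.sin y := Real.sin_pos_of_pos_of_lt_pi hy hyπ
  have hsin2 : Real.sin x = 2 * Real.sin y * Real.cos y := by
    rw [hy_def, ← Real.sin_two_mul]; ring_nf
  have hcos2 : Real.cos x = 1 - 2 * Real.sin y ^ 2 := by
    have h := Real.cos_two_mul y
    have h2 := Real.sin_sq_add_cos_sq y
    have : Real.cos (2*y) = 1 - 2 * Real.sin y ^ 2 := by nlinarith
    rw [hy_def] at this ⊢; rw [show 2 * (x/2) = x by ring] at this; exact this
  have hxy : x = 2*y := by rw [hy_def]; ring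
  rw [hsin2, hcos2, hxy]
  set s := Real.sin y
  set c := Real.cos y
  suffices h : 2*y^2*c < y*s + s^2*c by nlinarith [hs, hy]
  rcases le_or_gt c 0 with hc | hc
  · have hs1 : s ≤ 1 := Real.sin_le_one y
    have hyge : π/2 ≤ y := by
      by_contra h
      push_neg at h
      exact absurd (Real.cos_pos_of_mem_Ioo ⟨by linarith [pi_pos], h⟩) (not_lt.mpr hc)
    have hpi : (3:ℝ) < π := by linarith [Real.pi_gt_three]
    have h2y : 1 < 2*y^2 - s^2 := by nlinarith
    nlinarith [mul_pos hy hs]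
  · have hyπ2 : y < π/2 := by
      by_contra h
      push_neg at h
      have : Real.cos y ≤ 0 := Real.cos_nonpos_of_pi_div_two_le_of_le h (by linarith [pi_pos])
      linarith
    have htan := my_tan_lb hy hyπ2
    have hsl := my_sin_lb hy
    have htan' : c * (y + y^3/3) < s := by
      have := (mul_lt_mul_of_pos_left htan hc)
      rwa [Real.tan_eq_sin_div_cos, mul_div_cancel₀ _ (ne_of_gt hc)] at this
    have hylb : 0 < y - y^3/6 := by
      have : y^2 < 6 := by nlinarith [Real.pi_lt_d2]
      nlinarith
    have hs2 : (y - y^3/6)^2 < s^2 := by nlinarith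
    nlinarith [mul_lt_mul_of_pos_left hs2 hc, mul_lt_mul_of_pos_left htan' hy,
      pow_pos hy 6, mul_pos hc (pow_pos hy 6)]

lemma denom_pos' {x : ℝ} (hx : 0 < x) : 0 < x + Real.sin x := by
  rcases lt_or_ge x π with h | h
  · linarith [Real.sin_pos_of_pos_of_lt_pi hx h]
  · have : (3:ℝ) < π := by linarith [Real.pi_gt_three]
    linarith [Real.neg_one_le_sin x]

noncomputable def G (x : ℝ) : ℝ := 1 - 4*(1 - Real.cos x)/(x^2 + x * Real.sin x)

lemma G_strictMono : StrictMonoOn G (Set.Ioc 0 (2*π)) := by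
  apply strictMonoOn_of_deriv_pos (convex_Ioc 0 (2*π))
  · apply ContinuousOn.sub continuousOn_const
    apply ContinuousOn.div (by fun_prop) (by fun_prop)
    intro x hx
    have h1 : 0 < x * (x + Real.sin x) := mul_pos hx.1 (denom_pos' hx.1)
    intro h
    rw [show x^2 + x * Real.sin x = x * (x + Real.sin x) by ring] at h
    linarith
  · intro x hx
    rw [interior_Ioc] at hx
    have hxpos := hx.1
    have hDpos : 0 < x^2 + x * Real.sin x := by
      have := mul_pos hxpos (denom_pos' hxpos)
      nlinarith
    have hD : x^2 + x * Real.sin x ≠ 0 := ne_of_gt hDpos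
    have hN : HasDerivAt (fun x : ℝ => 4*(1 - Real.cos x)) (4 * Real.sin x) x := by
      have := (hasDerivAt_const x (1:ℝ)).sub (Real.hasDerivAt_cos x)
      simpa using (this.const_mul 4)
    have hDd : HasDerivAt (fun x : ℝ => x^2 + x * Real.sin x)
        (2*x + (1 * Real.sin x + x * Real.cos x)) x := by
      have h1 : HasDerivAt (fun x : ℝ => x^2) (2*x) x := by
        simpa using hasDerivAt_pow 2 x
      exact h1.add ((hasDerivAt_id x).mul (Real.hasDerivAt_sin x))
    have hG : HasDerivAt G (-((4 * Real.sin x * (x^2 + x * Real.sin x) -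
        4*(1 - Real.cos x) * (2*x + (1 * Real.sin x + x * Real.cos x))) /
        (x^2 + x * Real.sin x)^2)) x := by
      have := (hN.div hDd hD).const_sub 1
      exact this.congr_deriv (by ring)
    rw [hG.deriv]
    have hkey := key_ineq hxpos hx.2
    have hnum : 4*(1 - Real.cos x) * (2*x + (1 * Real.sin x + x * Real.cos x)) -
        4 * Real.sin x * (x^2 + x * Real.sin x)
        = 4 * ((x + Real.sin x) * (1 - Real.cos x) - x^2 * Real.sin x) := by
      nlinarith [Real.sin_sq_add_cos_sq x]
    have : 0 < (4*(1 - Real.cos x) * (2*x + (1 * Real.sin x + x * Real.cos x)) -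
        4 * Real.sin x * (x^2 + x * Real.sin x)) / (x^2 + x * Real.sin x)^2 := by
      rw [hnum]
      apply div_pos (by linarith) (by positivity)
    rw [← neg_div, neg_sub]
    exact this

lemma Feq {u : ℝ} (hu : 0 < u) :
    1 - 2 * nsinc (u / 2) ^ 2 / (1 + nsinc u) = G (π * u) := by
  have hu2 : u / 2 ≠ 0 := by positivity
  have hune : u ≠ 0 := ne_of_gt hu
  rw [nsinc, nsinc, if_neg hu2, if_neg hune, G]
  set x := π * u with hxdef
  have hx : 0 < x := mul_pos Real.pi_pos hu
  have hhalf : π * (u/2) = x/2 := by rw [hxdef]; ring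
  rw [hhalf]
  have hs2 : Real.sin (x/2)^2 = (1 - Real.cos x)/2 := by
    have h1 := Real.cos_two_mul (x/2)
    have h2 := Real.sin_sq_add_cos_sq (x/2)
    rw [show 2*(x/2) = x by ring] at h1
    nlinarith
  have hdp : 0 < x + Real.sin x := denom_pos' hx
  have hden : 1 + Real.sin x / x ≠ 0 := by
    have : 1 + Real.sin x / x = (x + Real.sin x)/x := by field_simp
    rw [this]
    positivity
  have hx2 : x/2 ≠ 0 := by positivity
  have hD : x^2 + x * Real.sin x ≠ 0 := by
    have : x^2 + x * Real.sin x = x * (x + Real.sin x) := by ring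
    rw [this]; positivity
  rw [div_pow, hs2]
  field_simp
  ring

/-- The worst-case two-tap interpolation error
`F(u) = 1 − 2 sinc(u/2)²/(1 + sinc u)` is strictly increasing on `(0, 2]`. -/
theorem stmt_6 :
    StrictMonoOn (fun u : ℝ => 1 - 2 * nsinc (u / 2) ^ 2 / (1 + nsinc u))
      (Set.Ioc (0 : ℝ) 2) := by
  intro a ha b hb hab
  simp only
  rw [Feq ha.1, Feq hb.1]
  exact G_strictMono ⟨mul_pos Real.pi_pos ha.1, by nlinarith [Real.pi_pos, ha.2]⟩
    ⟨mul_pos Real.pi_pos hb.1, by nlinarith [Real.pi_pos, hb.2]⟩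
    (mul_lt_mul_of_pos_left hab Real.pi_pos)
end

section
/- Let x(t) be a centered wide-sense stationary complex process with autocorrelation R_x(τ) = sinc(Bτ), let τ₀,…,τ_M and d₁,…,d_N be real delays, let α₀,…,α_M be independent complex random variables independent of x, with α_m centered of variance a_m² for m ≥ 1 and α₀ deterministic equal to a₀, and let y(t) = Σ_m α_m x(t−τ_m). For each m let w̃_m ∈ ℂ^N be the (deterministic) optimal Wiener weights for approximating x(t−τ_m) by (x(t−d₁),…,x(t−d_N)), with per-path MMSE ε̄²_m. Then the expectation over the channel coefficients of the total MMSE satisfies E_α[ min_w E|y(t) − Σ_n w_n x(t−d_n)|² ] = Σ_{m=0}^{M} a_m² ε̄²_m, where the inner minimum is over unconstrained w ∈ ℂ^N. -/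
open MeasureTheory ProbabilityTheory Real

section Aux

open ComplexConjugate

variable {Ω : Type*} [MeasurableSpace Ω] {P : Measure Ω}

lemma aux_norm_sq (F : Lp ℂ 2 P) : ‖F‖ ^ 2 = ∫ ω, ‖F ω‖ ^ 2 ∂P := by
  rw [@norm_sq_eq_re_inner ℂ, MeasureTheory.L2.inner_def]
  have h : ∀ ω : Ω, (inner ℂ (F ω) (F ω) : ℂ) = ((‖F ω‖ ^ 2 : ℝ) : ℂ) := by
    intro ω
    rw [RCLike.inner_apply, Complex.mul_conj, Complex.normSq_eq_norm_sq]
  simp_rw [h]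
  have h2 : ∫ ω, ((‖F ω‖ ^ 2 : ℝ) : ℂ) ∂P
      = ((∫ ω, ‖F ω‖ ^ 2 ∂P : ℝ) : ℂ) := integral_ofReal
  rw [h2]
  simp

lemma aux_int_sq (F : Lp ℂ 2 P) {f : Ω → ℂ} (h : ⇑F =ᵐ[P] f) :
    ∫ ω, ‖f ω‖ ^ 2 ∂P = ‖F‖ ^ 2 := by
  rw [aux_norm_sq]
  apply integral_congr_ae
  filter_upwards [h] with ω hω
  rw [hω]

lemma aux_coeFn_sum {ι : Type*} (s : Finset ι) (F : ι → Lp ℂ 2 P) :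
    ⇑(∑ i ∈ s, F i) =ᵐ[P] fun ω => ∑ i ∈ s, F i ω := by
  induction s using Finset.cons_induction with
  | empty => simp only [Finset.sum_empty]; exact Lp.coeFn_zero ℂ 2 P
  | cons i s his ih =>
    simp only [Finset.sum_cons]
    filter_upwards [Lp.coeFn_add (F i) (∑ j ∈ s, F j), ih] with ω h1 h2
    rw [h1]
    simp only [Pi.add_apply]
    rw [h2]

lemma aux_coeFn_comb {ι : Type*} [Fintype ι] (c : ι → ℂ) (g : ι → Ω → ℂ)
    (hg : ∀ i, MemLp (g i) 2 P) :
    ⇑(∑ i, c i • (hg i).toLp (g i)) =ᵐ[P] fun ω => ∑ i, c i * g i ω := by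
  have h2 : ∀ i : ι, ⇑(c i • (hg i).toLp (g i)) =ᵐ[P] fun ω => c i * g i ω := by
    intro i
    filter_upwards [Lp.coeFn_smul (c i) ((hg i).toLp (g i)), (hg i).coeFn_toLp] with ω ha hb
    simp [ha, hb]
  have h3 : ∀ᵐ ω ∂P, ∀ i, (c i • (hg i).toLp (g i)) ω = c i * g i ω := ae_all_iff.2 h2
  filter_upwards [aux_coeFn_sum Finset.univ (fun i => c i • (hg i).toLp (g i)), h3] with ω ha hb
  rw [ha]
  exact Finset.sum_congr rfl fun i _ => hb i

lemma aux_inner_eq_zero {E : Type*} [NormedAddCommGroup E] [InnerProductSpace ℂ E]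
    {u v : E} (h : ∀ c : ℂ, ‖u‖ ^ 2 ≤ ‖u - c • v‖ ^ 2) : (inner ℂ v u : ℂ) = 0 := by
  by_cases hv : v = 0
  · simp [hv]
  set p : ℂ := inner ℂ v u with hp
  set s : ℝ := ‖v‖ ^ 2 with hs
  have hvn : (0 : ℝ) < ‖v‖ := norm_pos_iff.mpr hv
  have hs0 : 0 < s := by positivity
  have hkey := h (p / (s : ℂ))
  rw [norm_sub_sq (𝕜 := ℂ)] at hkey
  have h1 : (inner ℂ u ((p / (s : ℂ)) • v) : ℂ) = ((Complex.normSq p / s : ℝ) : ℂ) := by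
    rw [inner_smul_right, ← inner_conj_symm u v, ← hp]
    rw [div_mul_eq_mul_div, Complex.mul_conj]
    push_cast
    ring
  have h2 : RCLike.re (inner ℂ u ((p / (s : ℂ)) • v) : ℂ) = Complex.normSq p / s := by
    rw [h1]; simp
  have h3 : ‖(p / (s : ℂ)) • v‖ ^ 2 = Complex.normSq p / s := by
    rw [norm_smul, norm_div, Complex.norm_real, Real.norm_of_nonneg hs0.le, mul_pow, div_pow,
      ← hs]
    have hnp : ‖p‖ ^ 2 = Complex.normSq p := by
      rw [Complex.sq_norm]
    rw [hnp]
    field_simp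
  rw [h2, h3] at hkey
  have hq : Complex.normSq p / s ≤ 0 := by linarith
  have hq' : 0 ≤ Complex.normSq p / s := div_nonneg (Complex.normSq_nonneg p) hs0.le
  have hq0 : Complex.normSq p / s = 0 := le_antisymm hq hq'
  rcases div_eq_zero_iff.mp hq0 with hns | hsz
  · exact Complex.normSq_eq_zero.mp hns
  · exact absurd hsz hs0.ne'

lemma aux_integrable_conj {μ : Measure Ω} {f : Ω → ℂ} (hf : Integrable f μ) :
    Integrable (fun ω => (starRingEnd ℂ) (f ω)) μ := by
  rw [← Integrable.re_im_iff]
  constructor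
  · exact hf.re.congr (ae_of_all _ fun ω => by simp)
  · exact hf.im.neg.congr (ae_of_all _ fun ω => by simp)

lemma aux_indep_integral_mul {μ : Measure Ω} {f g : Ω → ℂ}
    (h : IndepFun f g μ) (hf : Integrable f μ) (hg : Integrable g μ) :
    ∫ ω, f ω * g ω ∂μ = (∫ ω, f ω ∂μ) * ∫ ω, g ω ∂μ := by
  have hfr : Integrable (fun ω => (f ω).re) μ := by simpa using hf.re
  have hfi : Integrable (fun ω => (f ω).im) μ := by simpa using hf.im
  have hgr : Integrable (fun ω => (g ω).re) μ := by simpa using hg.re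
  have hgi : Integrable (fun ω => (g ω).im) μ := by simpa using hg.im
  have hRR : IndepFun (fun ω => (f ω).re) (fun ω => (g ω).re) μ :=
    h.comp Complex.measurable_re Complex.measurable_re
  have hRI : IndepFun (fun ω => (f ω).re) (fun ω => (g ω).im) μ :=
    h.comp Complex.measurable_re Complex.measurable_im
  have hIR : IndepFun (fun ω => (f ω).im) (fun ω => (g ω).re) μ :=
    h.comp Complex.measurable_im Complex.measurable_re
  have hII : IndepFun (fun ω => (f ω).im) (fun ω => (g ω).im) μ :=
    h.comp Complex.measurable_im Complex.measurable_im
  have iRR : Integrable (fun ω => (f ω).re * (g ω).re) μ := by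
    exact hRR.integrable_mul hfr hgr
  have iRI : Integrable (fun ω => (f ω).re * (g ω).im) μ := by
    exact hRI.integrable_mul hfr hgi
  have iIR : Integrable (fun ω => (f ω).im * (g ω).re) μ := by
    exact hIR.integrable_mul hfi hgr
  have iII : Integrable (fun ω => (f ω).im * (g ω).im) μ := by
    exact hII.integrable_mul hfi hgi
  have eRR : ∫ ω, (f ω).re * (g ω).re ∂μ = (∫ ω, (f ω).re ∂μ) * ∫ ω, (g ω).re ∂μ := by
    exact hRR.integral_fun_mul_eq_mul_integral hfr.aestronglyMeasurable hgr.aestronglyMeasurable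
  have eRI : ∫ ω, (f ω).re * (g ω).im ∂μ = (∫ ω, (f ω).re ∂μ) * ∫ ω, (g ω).im ∂μ := by
    exact hRI.integral_fun_mul_eq_mul_integral hfr.aestronglyMeasurable hgi.aestronglyMeasurable
  have eIR : ∫ ω, (f ω).im * (g ω).re ∂μ = (∫ ω, (f ω).im ∂μ) * ∫ ω, (g ω).re ∂μ := by
    exact hIR.integral_fun_mul_eq_mul_integral hfi.aestronglyMeasurable hgr.aestronglyMeasurable
  have eII : ∫ ω, (f ω).im * (g ω).im ∂μ = (∫ ω, (f ω).im ∂μ) * ∫ ω, (g ω).im ∂μ := by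
    exact hII.integral_fun_mul_eq_mul_integral hfi.aestronglyMeasurable hgi.aestronglyMeasurable
  have hprod : Integrable (fun ω => f ω * g ω) μ := by
    rw [← Integrable.re_im_iff]
    constructor
    · exact (iRR.sub iII).congr (ae_of_all _ fun ω => by simp [Complex.mul_re])
    · exact (iRI.add iIR).congr (ae_of_all _ fun ω => by simp [Complex.mul_im])
  have h2 := integral_re hf
  have h3 := integral_re hg
  have h4 := integral_im hf
  have h5 := integral_im hg
  simp only [RCLike.re_to_complex, RCLike.im_to_complex] at h2 h3 h4 h5
  apply Complex.ext
  · have h1 := integral_re hprod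
    simp only [RCLike.re_to_complex] at h1
    rw [← h1]
    calc ∫ ω, (f ω * g ω).re ∂μ
        = ∫ ω, ((f ω).re * (g ω).re - (f ω).im * (g ω).im) ∂μ := by
          simp_rw [Complex.mul_re]
      _ = (∫ ω, (f ω).re * (g ω).re ∂μ) - ∫ ω, (f ω).im * (g ω).im ∂μ :=
          integral_sub iRR iII
      _ = ((∫ ω, f ω ∂μ) * ∫ ω, g ω ∂μ).re := by
          rw [eRR, eII, h2, h3, h4, h5, Complex.mul_re]
  · have h1 := integral_im hprod
    simp only [RCLike.im_to_complex] at h1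
    rw [← h1]
    calc ∫ ω, (f ω * g ω).im ∂μ
        = ∫ ω, ((f ω).re * (g ω).im + (f ω).im * (g ω).re) ∂μ := by
          simp_rw [Complex.mul_im]
      _ = (∫ ω, (f ω).re * (g ω).im ∂μ) + ∫ ω, (f ω).im * (g ω).re ∂μ :=
          integral_add iRI iIR
      _ = ((∫ ω, f ω ∂μ) * ∫ ω, g ω ∂μ).im := by
          rw [eRI, eIR, h2, h3, h4, h5, Complex.mul_im]

end Aux

/-- Multipath decomposition of the unconstrained MMSE: for a centered
wide-sense stationary process `x` with autocorrelation `sinc(Bτ)`, independent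
channel coefficients `α_m` (with `α₀` deterministic equal to `a₀` and `α_m`
centered of variance `a_m²` for `m ≥ 1`), and per-path Wiener MMSE values
`ε̄²_m` attained by deterministic weights `wt_m`, the expectation over the
channel coefficients of the total unconstrained MMSE of approximating
`y(t) = Σ_m α_m x(t−τ_m)` by `(x(t−d₁),…,x(t−d_N))` equals `Σ_m a_m² ε̄²_m`. -/
theorem stmt_12 {Ω Ω' : Type*} [MeasurableSpace Ω] [MeasurableSpace Ω']
    (P : Measure Ω) [IsProbabilityMeasure P]
    (P' : Measure Ω') [IsProbabilityMeasure P']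
    (x : ℝ → Ω → ℂ) (B : ℝ) (hB : 0 < B)
    (hL2 : ∀ t, MemLp (x t) 2 P)
    (hcent : ∀ t, ∫ ω, x t ω ∂P = 0)
    (hcorr : ∀ t τ, ∫ ω, x t ω * (starRingEnd ℂ) (x (t + τ) ω) ∂P = (nsinc (B * τ) : ℂ))
    (M N : ℕ) (τ : Fin (M + 1) → ℝ) (d : Fin N → ℝ)
    (α : Fin (M + 1) → Ω' → ℂ) (a : Fin (M + 1) → ℝ)
    (hαmeas : ∀ m, Measurable (α m))
    (hαL2 : ∀ m, MemLp (α m) 2 P')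
    (hα0 : α 0 = fun _ => (a 0 : ℂ))
    (hαcent : ∀ m : Fin (M + 1), m ≠ 0 → ∫ ω', α m ω' ∂P' = 0)
    (hαvar : ∀ m, ∫ ω', ‖α m ω'‖ ^ 2 ∂P' = a m ^ 2)
    (hαindep : iIndepFun α P')
    (ε : Fin (M + 1) → ℝ) (wt : Fin (M + 1) → Fin N → ℂ)
    (hε : ∀ m, IsLeast
      {e : ℝ | ∃ w : Fin N → ℂ,
        e = ∫ ω, ‖x (-τ m) ω - ∑ n, w n * x (-d n) ω‖ ^ 2 ∂P} (ε m))
    (hwt : ∀ m, ∫ ω, ‖x (-τ m) ω - ∑ n, wt m n * x (-d n) ω‖ ^ 2 ∂P = ε m) :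
    ∫ ω', sInf {e : ℝ | ∃ w : Fin N → ℂ,
        e = ∫ ω, ‖∑ m, α m ω' * x (-τ m) ω - ∑ n, w n * x (-d n) ω‖ ^ 2 ∂P} ∂P'
      = ∑ m, a m ^ 2 * ε m := by
  classical
  -- Lp elements
  set T : Fin (M + 1) → Lp ℂ 2 P := fun m => (hL2 (-τ m)).toLp (x (-τ m)) with hT
  set K : Fin N → Lp ℂ 2 P := fun n => (hL2 (-d n)).toLp (x (-d n)) with hK
  set R : Fin (M + 1) → Lp ℂ 2 P := fun m => T m - ∑ n, wt m n • K n with hR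
  -- bridges between integrals and Lp norms
  have hcoeK : ∀ w : Fin N → ℂ,
      ⇑(∑ n, w n • K n) =ᵐ[P] fun ω => ∑ n, w n * x (-d n) ω := by
    intro w
    exact aux_coeFn_comb w (fun n => x (-d n)) (fun n => hL2 (-d n))
  have hcoeT : ∀ c : Fin (M + 1) → ℂ,
      ⇑(∑ m, c m • T m) =ᵐ[P] fun ω => ∑ m, c m * x (-τ m) ω := by
    intro c
    exact aux_coeFn_comb c (fun m => x (-τ m)) (fun m => hL2 (-τ m))
  have bridge2 : ∀ (m : Fin (M + 1)) (w : Fin N → ℂ),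
      ∫ ω, ‖x (-τ m) ω - ∑ n, w n * x (-d n) ω‖ ^ 2 ∂P
        = ‖T m - ∑ n, w n • K n‖ ^ 2 := by
    intro m w
    refine aux_int_sq _ ?_
    filter_upwards [Lp.coeFn_sub (T m) (∑ n, w n • K n), (hL2 (-τ m)).coeFn_toLp, hcoeK w]
      with ω h1 h2 h3
    rw [h1]
    simp only [Pi.sub_apply]
    rw [h2, h3]
  have bridge1 : ∀ (c : Fin (M + 1) → ℂ) (w : Fin N → ℂ),
      ∫ ω, ‖∑ m, c m * x (-τ m) ω - ∑ n, w n * x (-d n) ω‖ ^ 2 ∂P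
        = ‖(∑ m, c m • T m) - ∑ n, w n • K n‖ ^ 2 := by
    intro c w
    refine aux_int_sq _ ?_
    filter_upwards [Lp.coeFn_sub (∑ m, c m • T m) (∑ n, w n • K n), hcoeT c, hcoeK w]
      with ω h1 h2 h3
    rw [h1]
    simp only [Pi.sub_apply]
    rw [h2, h3]
  have hRnorm : ∀ m, ‖R m‖ ^ 2 = ε m := by
    intro m
    rw [← hwt m, bridge2 m (wt m)]
  -- orthogonality of residuals to the regressors
  have horth : ∀ (m : Fin (M + 1)) (n : Fin N), (inner ℂ (K n) (R m) : ℂ) = 0 := by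
    intro m n
    apply aux_inner_eq_zero
    intro c
    have hw : T m - ∑ n', (wt m n' + if n' = n then c else 0) • K n' = R m - c • K n := by
      simp only [add_smul, Finset.sum_add_distrib, ite_smul, zero_smul, Finset.sum_ite_eq',
        Finset.mem_univ, if_true, hR]
      rw [sub_add_eq_sub_sub]
    have hle := (hε m).2 ⟨fun n' => wt m n' + if n' = n then c else 0, rfl⟩
    rw [bridge2 m _, hw, ← hRnorm m] at hle
    exact hle
  -- pointwise identification of the inner ℂ infimum
  have hleast : ∀ ω' : Ω', IsLeast
      {e : ℝ | ∃ w : Fin N → ℂ,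
        e = ∫ ω, ‖∑ m, α m ω' * x (-τ m) ω - ∑ n, w n * x (-d n) ω‖ ^ 2 ∂P}
      (‖∑ m, α m ω' • R m‖ ^ 2) := by
    intro ω'
    set c : Fin (M + 1) → ℂ := fun m => α m ω' with hc
    set ws : Fin N → ℂ := fun n => ∑ m, c m * wt m n with hws
    have hu : (∑ m, c m • T m) - ∑ n, ws n • K n = ∑ m, c m • R m := by
      simp only [hR, smul_sub, Finset.sum_sub_distrib]
      congr 1
      simp only [hws, Finset.sum_smul, Finset.smul_sum, smul_smul]
      exact Finset.sum_comm
    constructor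
    · exact ⟨ws, by rw [bridge1 c ws, hu]⟩
    · rintro e ⟨w, rfl⟩
      rw [bridge1 c w]
      have hdecomp : (∑ m, c m • T m) - ∑ n, w n • K n
          = (∑ m, c m • R m) + ∑ n, (ws n - w n) • K n := by
        rw [← hu]
        simp only [sub_smul, Finset.sum_sub_distrib]
        abel
      rw [hdecomp, norm_add_sq (𝕜 := ℂ)]
      have hz : (inner ℂ (∑ m, c m • R m) (∑ n, (ws n - w n) • K n) : ℂ) = 0 := by
        rw [inner_sum]
        refine Finset.sum_eq_zero fun n _ => ?_
        rw [inner_smul_right, sum_inner]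
        have : ∀ m ∈ Finset.univ, (inner ℂ (c m • R m) (K n) : ℂ) = 0 := by
          intro m _
          rw [inner_smul_left, ← inner_conj_symm (R m) (K n), horth m n]
          simp
        rw [Finset.sum_eq_zero this, mul_zero]
      rw [hz]
      simp only [map_zero, mul_zero, add_zero]
      exact le_add_of_nonneg_right (sq_nonneg _)
  have hsInf : ∀ ω' : Ω',
      sInf {e : ℝ | ∃ w : Fin N → ℂ,
        e = ∫ ω, ‖∑ m, α m ω' * x (-τ m) ω - ∑ n, w n * x (-d n) ω‖ ^ 2 ∂P}
      = ‖∑ m, α m ω' • R m‖ ^ 2 := fun ω' => (hleast ω').csInf_eq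
  rw [integral_congr_ae (ae_of_all _ hsInf)]
  -- expectation over the channel coefficients
  have hαint : ∀ m, Integrable (α m) P' := fun m => (hαL2 m).integrable one_le_two
  have hIntmk : ∀ m k : Fin (M + 1),
      Integrable (fun ω' => (starRingEnd ℂ) (α m ω') * α k ω') P' := by
    intro m k
    have h := MeasureTheory.L2.integrable_inner (𝕜 := ℂ) ((hαL2 m).toLp (α m))
      ((hαL2 k).toLp (α k))
    refine h.congr ?_
    filter_upwards [(hαL2 m).coeFn_toLp, (hαL2 k).coeFn_toLp] with ω h1 h2
    rw [RCLike.inner_apply, h1, h2, mul_comm]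
  have hIntRe : ∀ m k : Fin (M + 1),
      Integrable (fun ω' =>
        ((starRingEnd ℂ) (α m ω') * α k ω' * (inner ℂ (R m) (R k) : ℂ)).re) P' := by
    intro m k
    have := ((hIntmk m k).mul_const (inner ℂ (R m) (R k) : ℂ)).re
    simpa using this
  have Ecc : ∀ m k : Fin (M + 1),
      ∫ ω', (starRingEnd ℂ) (α m ω') * α k ω' ∂P'
        = if m = k then ((a m ^ 2 : ℝ) : ℂ) else 0 := by
    intro m k
    by_cases hmk : m = k
    · subst hmk
      rw [if_pos rfl]
      have hpt : ∀ z : ℂ, (starRingEnd ℂ) z * z = ((‖z‖ ^ 2 : ℝ) : ℂ) := by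
        intro z
        rw [mul_comm, Complex.mul_conj, Complex.normSq_eq_norm_sq]
      simp_rw [hpt]
      have h2 : ∫ ω', ((‖α m ω'‖ ^ 2 : ℝ) : ℂ) ∂P'
          = ((∫ ω', ‖α m ω'‖ ^ 2 ∂P' : ℝ) : ℂ) := integral_ofReal
      rw [h2, hαvar m]
    · rw [if_neg hmk]
      by_cases hm0 : m = 0
      · subst hm0
        have hk0 : k ≠ 0 := fun h => hmk h.symm
        simp only [hα0]
        rw [integral_const_mul, hαcent k hk0, mul_zero]
      · by_cases hk0 : k = 0
        · subst hk0
          simp only [hα0]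
          rw [integral_mul_const, integral_conj, hαcent m hm0, map_zero, zero_mul]
        · have hind : IndepFun (fun ω' => (starRingEnd ℂ) (α m ω')) (α k) P' := by
            have h := hαindep.indepFun hmk
            exact h.comp (RCLike.continuous_conj.measurable) measurable_id
          rw [aux_indep_integral_mul hind (aux_integrable_conj (hαint m)) (hαint k),
            integral_conj, hαcent m hm0, hαcent k hk0, map_zero, zero_mul]
  have hG : ∀ m, (inner ℂ (R m) (R m) : ℂ).re = ε m := by
    intro m
    rw [← hRnorm m, @norm_sq_eq_re_inner ℂ]
    rfl
  have hexpand : ∀ ω' : Ω', ‖∑ m, α m ω' • R m‖ ^ 2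
      = ∑ m, ∑ k, ((starRingEnd ℂ) (α m ω') * α k ω' * (inner ℂ (R m) (R k) : ℂ)).re := by
    intro ω'
    rw [@norm_sq_eq_re_inner ℂ, sum_inner]
    simp only [inner_sum, inner_smul_left, inner_smul_right, RCLike.re_to_complex]
    rw [Complex.re_sum]
    refine Finset.sum_congr rfl fun m _ => ?_
    rw [Complex.re_sum]
    refine Finset.sum_congr rfl fun k _ => ?_
    congr 1
    ring
  calc ∫ ω', ‖∑ m, α m ω' • R m‖ ^ 2 ∂P'
      = ∫ ω', ∑ m, ∑ k,
          ((starRingEnd ℂ) (α m ω') * α k ω' * (inner ℂ (R m) (R k) : ℂ)).re ∂P' :=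
        integral_congr_ae (ae_of_all _ hexpand)
    _ = ∑ m, ∑ k, ∫ ω',
          ((starRingEnd ℂ) (α m ω') * α k ω' * (inner ℂ (R m) (R k) : ℂ)).re ∂P' := by
        rw [integral_finset_sum _ (fun m _ => integrable_finset_sum _ (fun k _ => hIntRe m k))]
        exact Finset.sum_congr rfl fun m _ => integral_finset_sum _ (fun k _ => hIntRe m k)
    _ = ∑ m, ∑ k,
          ((∫ ω', (starRingEnd ℂ) (α m ω') * α k ω' ∂P') * (inner ℂ (R m) (R k) : ℂ)).re := by
        refine Finset.sum_congr rfl fun m _ => Finset.sum_congr rfl fun k _ => ?_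
        have h1 := integral_re ((hIntmk m k).mul_const (inner ℂ (R m) (R k) : ℂ))
        simp only [RCLike.re_to_complex] at h1
        rw [h1, integral_mul_const]
    _ = ∑ m, (((a m ^ 2 : ℝ) : ℂ) * (inner ℂ (R m) (R m) : ℂ)).re := by
        refine Finset.sum_congr rfl fun m _ => ?_
        rw [Finset.sum_eq_single m]
        · rw [Ecc m m, if_pos rfl]
        · intro k _ hk
          rw [Ecc m k, if_neg fun h => hk h.symm, zero_mul, Complex.zero_re]
        · intro h
          exact absurd (Finset.mem_univ m) h
    _ = ∑ m, a m ^ 2 * ε m := by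
        refine Finset.sum_congr rfl fun m _ => ?_
        rw [← hG m]
        simp [Complex.mul_re, ← Complex.ofReal_pow]
end
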